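/- Any positive periodic solution u of -Δu + u - u^p = 0 on S¹/ε × ℝ^{N-1} tending to 0 as |x'| → ∞ uniformly in x₁ satisfies an exponential decay estimate: there exist a > 0 and C > 0 such that u(x₁,x') ≤ C e^{-a|x'|} for all (x₁,x'). -/

import Mathlib

open Real
open Filter
open scoped RealInnerProductSpace

/-- Unit vector along the first coordinate axis of `ℝ^N`. -/
noncomputable def e1 (N : ℕ) : EuclideanSpace ℝ (Fin N) :=
  if h : 0 < N then EuclideanSpace.single (⟨0, h⟩ : Fin N) (1 : ℝ) else 0

/-- Laplacian of a function on `ℝ^N`. -/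
noncomputable def lap {N : ℕ} (f : EuclideanSpace ℝ (Fin N) → ℝ)
    (x : EuclideanSpace ℝ (Fin N)) : ℝ :=
  ∑ i : Fin N, deriv (deriv (fun t : ℝ => f (x + t • EuclideanSpace.single i (1 : ℝ)))) 0

/-- Second derivative test: at an interior local max, the second derivative is ≤ 0. -/
lemma sdt (f : ℝ → ℝ) (hf : ∀ᶠ t in nhds (0:ℝ), DifferentiableAt ℝ f t)
    (hmax : IsLocalMax f 0) (hd : DifferentiableAt ℝ (deriv f) 0) :
    deriv (deriv f) 0 ≤ 0 := by
  by_contra h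
  push_neg at h
  have h1 : deriv f 0 = 0 := hmax.deriv_eq_zero
  have hslope : Filter.Tendsto (slope (deriv f) 0) (nhdsWithin 0 {(0:ℝ)}ᶜ)
      (nhds (deriv (deriv f) 0)) := hasDerivAt_iff_tendsto_slope.mp hd.hasDerivAt
  have h2 : ∀ᶠ t in nhdsWithin (0:ℝ) (Set.Ioi 0), 0 < deriv f t := by
    have hev : ∀ᶠ t in nhdsWithin (0:ℝ) {(0:ℝ)}ᶜ, 0 < slope (deriv f) 0 t :=
      hslope.eventually (eventually_gt_nhds h)
    have hle : nhdsWithin (0:ℝ) (Set.Ioi 0) ≤ nhdsWithin (0:ℝ) {(0:ℝ)}ᶜ :=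
      nhdsWithin_mono _ (fun t ht => ne_of_gt ht)
    filter_upwards [hle hev, self_mem_nhdsWithin] with t ht ht0
    have : 0 < (t - 0)⁻¹ * (deriv f t - deriv f 0) := by
      simpa [slope] using ht
    rw [h1, sub_zero, sub_zero] at this
    have htpos : (0:ℝ) < t := ht0
    nlinarith [inv_pos.mpr htpos]
  have h3 : ∀ᶠ t in nhdsWithin (0:ℝ) (Set.Ioi 0),
      0 < deriv f t ∧ DifferentiableAt ℝ f t ∧ f t ≤ f 0 := by
    filter_upwards [h2, (hf.filter_mono nhdsWithin_le_nhds),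
      (hmax.filter_mono nhdsWithin_le_nhds)] with t a b c using ⟨a, b, c⟩
  rw [eventually_nhdsWithin_iff] at h3
  rcases Metric.eventually_nhds_iff.mp h3 with ⟨δ, hδ, hball⟩
  set c := δ/2 with hc
  have hcpos : 0 < c := by positivity
  have hprop : ∀ t ∈ Set.Ioc (0:ℝ) c, 0 < deriv f t ∧ DifferentiableAt ℝ f t ∧ f t ≤ f 0 := by
    intro t ht
    have : dist t 0 < δ := by
      rw [Real.dist_eq, sub_zero, abs_of_pos ht.1]
      linarith [ht.2]
    exact hball this ht.1
  have hcont : ContinuousOn f (Set.Icc 0 c) := by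
    intro t ht
    rcases eq_or_lt_of_le ht.1 with rfl | hlt
    · exact hf.self_of_nhds.continuousAt.continuousWithinAt
    · exact ((hprop t ⟨hlt, ht.2⟩).2.1).continuousAt.continuousWithinAt
  have hmono : StrictMonoOn f (Set.Icc 0 c) := by
    apply strictMonoOn_of_deriv_pos (convex_Icc 0 c) hcont
    intro t ht
    rw [interior_Icc] at ht
    exact (hprop t ⟨ht.1, le_of_lt ht.2⟩).1
  have : f 0 < f c := hmono ⟨le_refl 0, le_of_lt hcpos⟩ ⟨le_of_lt hcpos, le_refl c⟩ hcpos
  have : f c ≤ f 0 := (hprop c ⟨hcpos, le_refl c⟩).2.2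
  linarith

lemma barrier (C a b r : ℝ) (hC : 0 < C) (ha : 0 < a) (hr : 0 < r) (hb : b^2 ≤ r^2) :
    ∃ ψ : ℝ → ℝ,
      (∀ᶠ t in nhds (0:ℝ), HasDerivAt
        (fun t => C * Real.exp (-(a * Real.sqrt (r^2 + 2*b*t + t^2)))) (ψ t) t) ∧
      ∃ D, HasDerivAt ψ D 0 ∧ D ≤ a^2 * (C * Real.exp (-(a * r))) := by
  set q : ℝ → ℝ := fun t => r^2 + 2*b*t + t^2 with hq
  set s : ℝ → ℝ := fun t => Real.sqrt (q t) with hs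
  set φ : ℝ → ℝ := fun t => C * Real.exp (-(a * s t)) with hφ
  have hq0 : q 0 = r^2 := by simp [hq]
  have hs0 : s 0 = r := by rw [hs]; simp [hq0]; exact Real.sqrt_sq hr.le
  have hqd : ∀ t, HasDerivAt q (2*b + 2*t) t := by
    intro t
    have h1 : HasDerivAt (fun t : ℝ => r^2 + 2*b*t + t^2) (0 + 2*b*1 + 2*t) t := by
      exact (((hasDerivAt_const t (r^2)).add ((hasDerivAt_id t).const_mul (2*b))).add
        (by simpa using (hasDerivAt_pow 2 t)))
    simpa using h1
  have hsd : ∀ t, 0 < q t → HasDerivAt s ((2*b + 2*t) / (2 * s t)) t := by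
    intro t ht
    exact (hqd t).sqrt (ne_of_gt ht)
  have hφd : ∀ t, 0 < q t → HasDerivAt φ (φ t * (-(a * ((2*b + 2*t) / (2 * s t))))) t := by
    intro t ht
    have h1 : HasDerivAt (fun t => -(a * s t)) (-(a * ((2*b + 2*t) / (2 * s t)))) t :=
      (((hsd t ht).const_mul a).neg)
    have h2 := h1.exp
    have h3 := h2.const_mul C
    convert h3 using 1
    show C * Real.exp (-(a * s t)) * _ = _
    ring
    all_goals rfl
  set ψ : ℝ → ℝ := fun t => φ t * (-(a * ((2*b + 2*t) / (2 * s t)))) with hψ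
  have hqpos : ∀ᶠ t in nhds (0:ℝ), 0 < q t := by
    have hqc : Continuous q := by fun_prop
    have : (0:ℝ) < q 0 := by rw [hq0]; positivity
    exact (hqc.continuousAt).eventually (eventually_gt_nhds this)
  refine ⟨ψ, ?_, ?_⟩
  · filter_upwards [hqpos] with t ht
    exact hφd t ht
  · -- derivative of ψ at 0
    have hq00 : (0:ℝ) < q 0 := by rw [hq0]; positivity
    have hs0ne : s 0 ≠ 0 := by rw [hs0]; exact ne_of_gt hr
    have hnd : HasDerivAt (fun t : ℝ => 2*b + 2*t) 2 0 := by
      simpa using ((hasDerivAt_id (0:ℝ)).const_mul 2).const_add (2*b)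
    have hdd : HasDerivAt (fun t : ℝ => 2 * s t) (2 * ((2*b + 2*0) / (2 * s 0))) 0 :=
      (hsd 0 hq00).const_mul 2
    have hden : 2 * s 0 ≠ 0 := by simp [hs0]; exact ne_of_gt hr
    have hgd : HasDerivAt (fun t => -(a * ((2*b + 2*t) / (2 * s t))))
        (-(a * ((2 * (2 * s 0) - (2*b + 2*0) * (2 * ((2*b + 2*0) / (2 * s 0)))) / (2 * s 0)^2))) 0 := by
      exact ((hnd.div hdd hden).const_mul a).neg
    have hψd : HasDerivAt ψ
        (ψ 0 * (-(a * ((2*b + 2*0) / (2 * s 0)))) + φ 0 *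
          (-(a * ((2 * (2 * s 0) - (2*b + 2*0) * (2 * ((2*b + 2*0) / (2 * s 0)))) / (2 * s 0)^2)))) 0 := by
      exact (hφd 0 hq00).mul hgd
    refine ⟨_, hψd, ?_⟩
    have hφ00 : φ 0 = C * Real.exp (-(a * r)) := by simp only [hφ]; rw [hs0]
    simp only [hψ]
    rw [hs0, hφ00]
    set E := C * Real.exp (-(a * r)) with hE
    have hEpos : 0 < E := by rw [hE]; positivity
    have h1 : E * (-(a * ((2*b + 2*0) / (2 * r)))) * (-(a * ((2*b + 2*0) / (2 * r)))) +
        E * (-(a * ((2 * (2 * r) - (2*b + 2*0) * (2 * ((2*b + 2*0) / (2 * r)))) / (2 * r)^2)))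
        = E * (a^2 * b^2 / r^2 - a * (r^2 - b^2) / r^3) := by
      field_simp
      ring
    rw [h1]
    have h2 : a^2 * b^2 / r^2 - a * (r^2 - b^2) / r^3 ≤ a^2 := by
      have t1 : a^2 * b^2 / r^2 ≤ a^2 := by
        rw [div_le_iff₀ (by positivity)]
        nlinarith
      have t2 : 0 ≤ a * (r^2 - b^2) / r^3 := by
        apply div_nonneg _ (by positivity)
        nlinarith
      linarith
    nlinarith

lemma periodZ {E : Type*} [AddCommGroup E] (f : E → ℝ) (c : E)
    (h : ∀ x, f (x + c) = f x) (k : ℤ) (x : E) : f (x + k • c) = f x := by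
  induction k using Int.induction_on with
  | zero => simp
  | succ n ih =>
      have he : x + ((n:ℤ)+1) • c = (x + (n:ℤ) • c) + c := by
        rw [add_zsmul, one_zsmul, add_assoc]
      rw [he, h, ih]
  | pred n ih =>
      have he : x + (-(n:ℤ)) • c = (x + (-(n:ℤ)-1) • c) + c := by
        rw [sub_zsmul, one_zsmul]; abel
      rw [← ih, he, h]


set_option maxHeartbeats 1000000 in

/-- A positive periodic solution of `-Δu + u - u^p = 0` on `S¹/ε × ℝ^{N-1}` tending to
`0` as `|x'| → ∞` uniformly in `x₁` decays exponentially in `x'`: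
`u(x₁,x') ≤ C e^{-a|x'|}`. -/
theorem stmt12 (N : ℕ) (hN : 2 ≤ N) (p : ℝ) (hp : 2 ≤ p)
    (hpsub : 3 ≤ N → p < ((N : ℝ) + 2) / ((N : ℝ) - 2))
    (ε : ℝ) (hε : 0 < ε)
    (u : EuclideanSpace ℝ (Fin N) → ℝ)
    (hupos : ∀ x, 0 < u x) (husmooth : ContDiff ℝ 2 u)
    (hueq : ∀ x, -(lap u x) + u x - u x ^ p = 0)
    (huper : ∀ x, u (x + (2 * Real.pi / ε) • e1 N) = u x)
    (hudecay : ∀ δ : ℝ, 0 < δ → ∃ R : ℝ, ∀ x : EuclideanSpace ℝ (Fin N),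
      R ≤ ‖x - x (⟨0, by omega⟩ : Fin N) • e1 N‖ → u x ≤ δ) :
    ∃ a > 0, ∃ C > 0, ∀ x : EuclideanSpace ℝ (Fin N),
      u x ≤ C * Real.exp (-a * ‖x - x (⟨0, by omega⟩ : Fin N) • e1 N‖) := by
  have hNpos : 0 < N := by omega
  set i0 : Fin N := ⟨0, hNpos⟩ with hi0
  have he1 : e1 N = EuclideanSpace.single i0 (1 : ℝ) := dif_pos hNpos
  have hne1 : ‖e1 N‖ = 1 := by rw [he1]; simp
  set T : ℝ := 2 * Real.pi / ε with hTdef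
  have hTpos : 0 < T := by
    have := Real.pi_pos
    positivity
  set rr : EuclideanSpace ℝ (Fin N) → ℝ := fun x => ‖x - x i0 • e1 N‖ with hrrdef
  have hrrcont : Continuous rr := by
    apply Continuous.norm
    exact continuous_id.sub (((EuclideanSpace.proj i0).continuous).smul continuous_const)
  have hpcont : Continuous (fun x : EuclideanSpace ℝ (Fin N) => x i0) :=
    (EuclideanSpace.proj i0).continuous
  have happ0 : ∀ (x : EuclideanSpace ℝ (Fin N)) (t : ℝ), (x + t • e1 N) i0 = x i0 + t := by
    intro x t
    rw [he1]
    simp [EuclideanSpace.single_apply]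
  have hrr_shift : ∀ (x : EuclideanSpace ℝ (Fin N)) (t : ℝ), rr (x + t • e1 N) = rr x := by
    intro x t
    rw [hrrdef]
    simp only [happ0]
    congr 1
    rw [add_smul]
    abel
  have hu_perZ : ∀ (k : ℤ) (x), u (x + (k * T) • e1 N) = u x := by
    intro k x
    have : ((k : ℝ) * T) • e1 N = k • (T • e1 N) := by
      rw [mul_smul, Int.cast_smul_eq_zsmul]
    rw [this]
    exact periodZ u (T • e1 N) (fun x => huper x) k x
  have hshift : ∀ x : EuclideanSpace ℝ (Fin N), ∃ y, u y = u x ∧ rr y = rr x ∧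
      y i0 ∈ Set.Icc 0 T := by
    intro x
    set k : ℤ := -⌊x i0 / T⌋ with hk
    refine ⟨x + ((k : ℝ) * T) • e1 N, hu_perZ k x, hrr_shift x _, ?_⟩
    rw [happ0]
    have hfr : x i0 + (k : ℝ) * T = T * Int.fract (x i0 / T) := by
      rw [hk, Int.fract]
      push_cast
      field_simp
      ring
    rw [hfr]
    constructor
    · exact mul_nonneg hTpos.le (Int.fract_nonneg _)
    · nlinarith [Int.fract_lt_one (x i0 / T), hTpos]
  have hucont : Continuous u := husmooth.continuous
  -- choose R0
  obtain ⟨R0', hR0'⟩ := hudecay (1/2) (by norm_num)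
  set R0 : ℝ := max R0' 1 with hR0def
  have hR0ge1 : (1:ℝ) ≤ R0 := le_max_right _ _
  have hR0decay : ∀ x, R0 ≤ rr x → u x ≤ 1/2 := by
    intro x hx
    exact hR0' x (le_trans (le_max_left _ _) hx)
  -- constants
  set a : ℝ := 1 / (2 * N) with hadef
  have ha : 0 < a := by
    rw [hadef]
    have : (0:ℝ) < N := by exact_mod_cast hNpos
    positivity
  set C0 : ℝ := (1/2) * Real.exp (a * R0) with hC0def
  have hC0pos : 0 < C0 := by rw [hC0def]; positivity
  set v : EuclideanSpace ℝ (Fin N) → ℝ := fun x => C0 * Real.exp (-(a * rr x)) with hvdef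
  have hvpos : ∀ x, 0 < v x := by intro x; rw [hvdef]; positivity
  have hvcont : Continuous v := by
    rw [hvdef]
    fun_prop
  have hcomp : ∀ A B : ℝ, IsCompact {x : EuclideanSpace ℝ (Fin N) |
      rr x ∈ Set.Icc A B ∧ x i0 ∈ Set.Icc 0 T} := by
    intro A B
    apply Metric.isCompact_of_isClosed_isBounded
    · exact ((isClosed_Icc.preimage hrrcont).inter (isClosed_Icc.preimage hpcont))
    · apply (Metric.isBounded_closedBall (x := (0 : EuclideanSpace ℝ (Fin N))) (r := B + T)).subset
      intro x hx
      rw [Metric.mem_closedBall, dist_zero_right]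
      have h1 : ‖x‖ ≤ rr x + |x i0| * ‖e1 N‖ := by
        calc ‖x‖ = ‖(x - x i0 • e1 N) + x i0 • e1 N‖ := by rw [sub_add_cancel]
        _ ≤ ‖x - x i0 • e1 N‖ + ‖x i0 • e1 N‖ := norm_add_le _ _
        _ = rr x + |x i0| * ‖e1 N‖ := by rw [norm_smul]; rfl
      rw [hne1, mul_one] at h1
      have h2 : |x i0| ≤ T := by
        rw [abs_le]
        exact ⟨by linarith [hx.2.1, hTpos.le], hx.2.2⟩
      linarith [hx.1.2]
  have key : ∀ x, R0 ≤ rr x → u x ≤ v x := by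
    by_contra hcon
    push_neg at hcon
    obtain ⟨xs, hxsR, hxslt⟩ := hcon
    set w : EuclideanSpace ℝ (Fin N) → ℝ := fun x => u x - v x with hwdef
    have hwcont : Continuous w := hucont.sub hvcont
    set m : ℝ := w xs with hmdef
    have hmpos : 0 < m := by
      have : w xs = u xs - v xs := rfl
      rw [hmdef, this]
      linarith
    obtain ⟨R1', hR1'⟩ := hudecay (m/2) (by linarith)
    set R1 : ℝ := max R1' (rr xs) with hR1def
    set K : Set (EuclideanSpace ℝ (Fin N)) :=
      {x | rr x ∈ Set.Icc R0 R1 ∧ x i0 ∈ Set.Icc 0 T} with hKdef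
    have hKcomp : IsCompact K := hcomp R0 R1
    obtain ⟨ys, hysu, hysr, hysI⟩ := hshift xs
    have hvshift : ∀ (z : EuclideanSpace ℝ (Fin N)) y, rr y = rr z → v y = v z := by
      intro z y hy
      show C0 * Real.exp (-(a * rr y)) = C0 * Real.exp (-(a * rr z))
      rw [hy]
    have hysw : w ys = m := by
      show u ys - v ys = m
      rw [hysu, hvshift xs ys hysr]
    have hysK : ys ∈ K := ⟨⟨by rw [hysr]; exact hxsR, by rw [hysr]; exact le_max_right _ _⟩, hysI⟩
    obtain ⟨x0, hx0K, hx0max'⟩ := hKcomp.exists_isMaxOn ⟨ys, hysK⟩ hwcont.continuousOn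
    have hx0m : m ≤ w x0 := by rw [← hysw]; exact hx0max' hysK
    have hglobal : ∀ x, R0 ≤ rr x → w x ≤ w x0 := by
      intro x hx
      rcases le_or_gt (rr x) R1 with h | h
      · obtain ⟨y, hyu, hyr, hyI⟩ := hshift x
        have hyK : y ∈ K := ⟨⟨by rw [hyr]; exact hx, by rw [hyr]; exact h⟩, hyI⟩
        have hwy : w y = w x := by
          show u y - v y = u x - v x
          rw [hyu, hvshift x y hyr]
        rw [← hwy]
        exact hx0max' hyK
      · have h1 : u x ≤ m/2 := hR1' x (le_trans (le_max_left _ _) h.le)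
        have h2 : w x ≤ u x := by
          show u x - v x ≤ u x
          linarith [hvpos x]
        calc w x ≤ u x := h2
        _ ≤ m/2 := h1
        _ ≤ w x0 := le_trans (by linarith [hmpos] : m/2 ≤ m) hx0m
    have hx0R : R0 < rr x0 := by
      rcases lt_or_eq_of_le hx0K.1.1 with h | h
      · exact h
      · exfalso
        have h1 : u x0 ≤ 1/2 := hR0decay x0 hx0K.1.1
        have h2 : v x0 = 1/2 := by
          show C0 * Real.exp (-(a * rr x0)) = 1/2
          rw [← h, hC0def, mul_assoc, ← Real.exp_add]
          norm_num
        have h3 : w x0 = u x0 - v x0 := rfl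
        linarith
    have hlocmax : IsLocalMax w x0 := by
      have hopen : IsOpen {x : EuclideanSpace ℝ (Fin N) | R0 < rr x} :=
        isOpen_lt continuous_const hrrcont
      filter_upwards [hopen.mem_nhds hx0R] with x hx using hglobal x (le_of_lt hx)
    -- per-direction second derivative bound
    have hcore : ∀ i : Fin N,
        deriv (deriv (fun t : ℝ => u (x0 + t • EuclideanSpace.single i (1:ℝ)))) 0 ≤
          (if i = i0 then 0 else a^2 * v x0) := by
      intro i
      have hγc : ContDiff ℝ 2 (fun t : ℝ => x0 + t • EuclideanSpace.single i (1:ℝ)) :=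
        contDiff_const.add (contDiff_id.smul contDiff_const)
      have huiC : ContDiff ℝ ((1:ℕ)+1)
          (fun t : ℝ => u (x0 + t • EuclideanSpace.single i (1:ℝ))) := by
        exact_mod_cast husmooth.comp hγc
      have huidiff : Differentiable ℝ
          (fun t : ℝ => u (x0 + t • EuclideanSpace.single i (1:ℝ))) :=
        huiC.differentiable (by norm_num)
      have hui'diff : Differentiable ℝ
          (deriv (fun t : ℝ => u (x0 + t • EuclideanSpace.single i (1:ℝ)))) :=
        ((contDiff_succ_iff_deriv.mp huiC).2.2).differentiable (by norm_num)
      have hγ0 : x0 + (0:ℝ) • EuclideanSpace.single i (1:ℝ) = x0 := by simp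
      have htend : Filter.Tendsto (fun t : ℝ => x0 + t • EuclideanSpace.single i (1:ℝ))
          (nhds 0) (nhds x0) := by
        have h := (hγc.continuous.tendsto (0:ℝ))
        rwa [hγ0] at h
      have hlm : IsLocalMax (fun t : ℝ => w (x0 + t • EuclideanSpace.single i (1:ℝ))) 0 := by
        have h1 := htend.eventually hlocmax
        filter_upwards [h1] with t ht
        simpa [hγ0] using ht
      by_cases hii : i = i0
      · rw [if_pos hii]
        rw [hii]
        rw [hii] at huidiff hui'diff hlm
        have hvconst : ∀ t : ℝ, v (x0 + t • EuclideanSpace.single i0 (1:ℝ)) = v x0 := by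
          intro t
          rw [← he1]
          exact hvshift x0 _ (hrr_shift x0 t)
        have hweq : (fun t : ℝ => w (x0 + t • EuclideanSpace.single i0 (1:ℝ)))
            = fun t : ℝ => u (x0 + t • EuclideanSpace.single i0 (1:ℝ)) - v x0 := by
          funext t
          show u _ - v _ = _
          rw [hvconst t]
        have hlm2 : IsLocalMax
            (fun t : ℝ => u (x0 + t • EuclideanSpace.single i0 (1:ℝ)) - v x0) 0 := hweq ▸ hlm
        have hd1 : ∀ᶠ t in nhds (0:ℝ), DifferentiableAt ℝ
            (fun t : ℝ => u (x0 + t • EuclideanSpace.single i0 (1:ℝ)) - v x0) t :=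
          Filter.Eventually.of_forall (fun t => (huidiff t).sub_const _)
        have hdeq : deriv (fun t : ℝ => u (x0 + t • EuclideanSpace.single i0 (1:ℝ)) - v x0)
            = deriv (fun t : ℝ => u (x0 + t • EuclideanSpace.single i0 (1:ℝ))) := by
          funext s
          exact deriv_sub_const _
        have hs := sdt _ hd1 hlm2 (by rw [hdeq]; exact hui'diff 0)
        rw [hdeq] at hs
        exact hs
      · rw [if_neg hii]
        set y : EuclideanSpace ℝ (Fin N) := x0 - x0 i0 • e1 N with hydef
        have hry : ‖y‖ = rr x0 := rfl
        have hrpos : 0 < rr x0 := by linarith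
        have hinner : (inner ℝ y (EuclideanSpace.single i (1:ℝ)) : ℝ) = y i := by
          rw [EuclideanSpace.inner_single_right]
          simp
        have hb2 : (y i)^2 ≤ (rr x0)^2 := by
          have h1 : |(inner ℝ y (EuclideanSpace.single i (1:ℝ)) : ℝ)|
              ≤ ‖y‖ * ‖EuclideanSpace.single i (1:ℝ)‖ := abs_real_inner_le_norm _ _
          rw [hinner, hry] at h1
          simp only [EuclideanSpace.norm_single, norm_one, mul_one] at h1
          nlinarith [abs_nonneg (y i), sq_abs (y i), abs_le.mp h1]
        have hvieq : (fun t : ℝ => v (x0 + t • EuclideanSpace.single i (1:ℝ)))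
            = fun t : ℝ => C0 * Real.exp (-(a * Real.sqrt
              ((rr x0)^2 + 2*(y i)*t + t^2))) := by
          funext t
          show C0 * Real.exp (-(a * rr (x0 + t • EuclideanSpace.single i (1:ℝ)))) = _
          have happi0 : (x0 + t • EuclideanSpace.single i (1:ℝ)) i0 = x0 i0 := by
            have hs1 : EuclideanSpace.single i (1:ℝ) i0 = 0 := by
              rw [EuclideanSpace.single_apply, if_neg (fun h => hii h.symm)]
            show x0 i0 + t * EuclideanSpace.single i (1:ℝ) i0 = x0 i0
            rw [hs1]
            ring
          have hvec : (x0 + t • EuclideanSpace.single i (1:ℝ))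
              - (x0 + t • EuclideanSpace.single i (1:ℝ)) i0 • e1 N
              = y + t • EuclideanSpace.single i (1:ℝ) := by
            rw [happi0, hydef]
            abel
          have hrrval : rr (x0 + t • EuclideanSpace.single i (1:ℝ))
              = ‖y + t • EuclideanSpace.single i (1:ℝ)‖ := by
            show ‖_ - _‖ = _
            rw [hvec]
          have hnorm : ‖y + t • EuclideanSpace.single i (1:ℝ)‖
              = Real.sqrt ((rr x0)^2 + 2*(y i)*t + t^2) := by
            rw [← Real.sqrt_sq (norm_nonneg (y + t • EuclideanSpace.single i (1:ℝ)))]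
            congr 1
            rw [norm_add_sq_real, real_inner_smul_right, hinner, norm_smul, ← hry]
            simp only [EuclideanSpace.norm_single, norm_one, mul_one, Real.norm_eq_abs]
            rw [sq_abs]
            ring
          rw [hrrval, hnorm]
        obtain ⟨ψ, hψev, D, hψD, hDle⟩ := barrier C0 a (y i) (rr x0) hC0pos ha hrpos hb2
        rw [← hvieq] at hψev
        have hfev : ∀ᶠ t in nhds (0:ℝ), DifferentiableAt ℝ
            (fun s : ℝ => u (x0 + s • EuclideanSpace.single i (1:ℝ))
              - v (x0 + s • EuclideanSpace.single i (1:ℝ))) t := by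
          filter_upwards [hψev] with t ht
          exact (huidiff t).sub ht.differentiableAt
        have hlm2 : IsLocalMax (fun s : ℝ => u (x0 + s • EuclideanSpace.single i (1:ℝ))
            - v (x0 + s • EuclideanSpace.single i (1:ℝ))) 0 := hlm
        have hderiv_eq : (fun t : ℝ => deriv (fun s : ℝ =>
              u (x0 + s • EuclideanSpace.single i (1:ℝ))
              - v (x0 + s • EuclideanSpace.single i (1:ℝ))) t)
            =ᶠ[nhds (0:ℝ)] (fun t : ℝ =>
              deriv (fun s : ℝ => u (x0 + s • EuclideanSpace.single i (1:ℝ))) t - ψ t) := by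
          filter_upwards [hψev] with t ht
          rw [deriv_fun_sub (huidiff t) ht.differentiableAt, ht.deriv]
        have hd0 : DifferentiableAt ℝ (deriv (fun s : ℝ =>
            u (x0 + s • EuclideanSpace.single i (1:ℝ))
            - v (x0 + s • EuclideanSpace.single i (1:ℝ)))) 0 := by
          rw [Filter.EventuallyEq.differentiableAt_iff hderiv_eq]
          exact (hui'diff 0).sub hψD.differentiableAt
        have hs := sdt _ hfev hlm2 hd0
        have hdd : deriv (deriv (fun s : ℝ =>
            u (x0 + s • EuclideanSpace.single i (1:ℝ))
            - v (x0 + s • EuclideanSpace.single i (1:ℝ)))) 0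
            = deriv (deriv (fun s : ℝ => u (x0 + s • EuclideanSpace.single i (1:ℝ)))) 0 - D := by
          rw [hderiv_eq.deriv_eq, deriv_fun_sub (hui'diff 0) hψD.differentiableAt, hψD.deriv]
        rw [hdd] at hs
        have hvx0 : v x0 = C0 * Real.exp (-(a * rr x0)) := rfl
        rw [hvx0]
        linarith
    -- sum up
    have hlapval : lap u x0 = ∑ i : Fin N,
        deriv (deriv (fun t : ℝ => u (x0 + t • EuclideanSpace.single i (1:ℝ)))) 0 := rfl
    have hsum : lap u x0 ≤ ((N:ℝ) - 1) * (a^2 * v x0) := by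
      rw [hlapval]
      calc ∑ i : Fin N, deriv (deriv (fun t : ℝ => u (x0 + t • EuclideanSpace.single i (1:ℝ)))) 0
          ≤ ∑ i : Fin N, (if i = i0 then 0 else a^2 * v x0) :=
            Finset.sum_le_sum (fun i _ => hcore i)
        _ = ((N:ℝ) - 1) * (a^2 * v x0) := by
            rw [← Finset.add_sum_erase _ _ (Finset.mem_univ i0), if_pos rfl, zero_add]
            rw [Finset.sum_congr rfl (fun j hj => if_neg (Finset.mem_erase.mp hj).1)]
            rw [Finset.sum_const, Finset.card_erase_of_mem (Finset.mem_univ i0),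
              Finset.card_univ, Fintype.card_fin, nsmul_eq_mul]
            congr 1
            rw [Nat.cast_sub hNpos]
            norm_num
    have hlapx0 : lap u x0 = u x0 - u x0 ^ p := by
      have := hueq x0
      linarith
    have hux0le : u x0 ≤ 1/2 := hR0decay x0 hx0R.le
    have hux0pos := hupos x0
    have hupow : u x0 ^ p ≤ u x0 * u x0 := by
      have h1 : u x0 ^ p ≤ u x0 ^ (2:ℝ) :=
        Real.rpow_le_rpow_of_exponent_ge hux0pos (by linarith) hp
      have h2 : u x0 ^ (2:ℝ) = u x0 * u x0 := by
        rw [show (2:ℝ) = ((2:ℕ):ℝ) by norm_num, Real.rpow_natCast]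
        ring
      rw [h2] at h1
      exact h1
    have hvltu : v x0 < u x0 := by
      have h3 : m ≤ u x0 - v x0 := hx0m
      linarith
    have hcoef : ((N:ℝ) - 1) * a^2 ≤ 1/4 := by
      have hNpos' : (0:ℝ) < N := by exact_mod_cast hNpos
      have hNge : (2:ℝ) ≤ N := by exact_mod_cast hN
      have ha2 : a^2 = 1/(4*(N:ℝ)^2) := by
        rw [hadef]
        field_simp
        ring
      have h6 : ((N:ℝ)-1) * a^2 = ((N:ℝ)-1)/(4*(N:ℝ)^2) := by rw [ha2]; ring
      rw [h6, div_le_iff₀ (by nlinarith : (0:ℝ) < 4*(N:ℝ)^2)]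
      nlinarith
    have hq1 : ((N:ℝ) - 1) * (a^2 * v x0) ≤ (1/4) * v x0 := by
      have := mul_le_mul_of_nonneg_right hcoef (hvpos x0).le
      nlinarith
    nlinarith
  -- conclusion
  set K0 : Set (EuclideanSpace ℝ (Fin N)) :=
    {x | rr x ∈ Set.Icc 0 R0 ∧ x i0 ∈ Set.Icc 0 T} with hK0def
  have hK0comp : IsCompact K0 := hcomp 0 R0
  have hK0ne : K0.Nonempty := by
    refine ⟨0, ?_, ?_⟩
    · constructor
      · exact norm_nonneg _
      · have : rr 0 = 0 := by rw [hrrdef]; simp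
        rw [this]; linarith
    · simp only [Set.mem_Icc]
      constructor
      · rfl
      · exact hTpos.le
  obtain ⟨z0, hz0K, hz0max'⟩ := hK0comp.exists_isMaxOn hK0ne hucont.continuousOn
  have hz0max : ∀ y ∈ K0, u y ≤ u z0 := fun y hy => hz0max' hy
  set M : ℝ := u z0 with hMdef
  have hMpos : 0 < M := hupos z0
  refine ⟨a, ha, C0 + M * Real.exp (a * R0), by positivity, ?_⟩
  intro x
  show u x ≤ _ * Real.exp (-a * rr x)
  rw [neg_mul]
  rcases le_or_gt R0 (rr x) with hcase | hcase
  · have h1 : u x ≤ C0 * Real.exp (-(a * rr x)) := key x hcase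
    have h2 : (0:ℝ) ≤ M * Real.exp (a * R0) * Real.exp (-(a * rr x)) := by positivity
    nlinarith [Real.exp_pos (-(a * rr x))]
  · obtain ⟨y, hyu, hyr, hyI⟩ := hshift x
    have hyK : y ∈ K0 := by
      refine ⟨⟨norm_nonneg _, ?_⟩, hyI⟩
      rw [hyr]; linarith
    have h1 : u x ≤ M := by rw [← hyu]; exact hz0max y hyK
    have h2 : M ≤ M * Real.exp (a * R0) * Real.exp (-(a * rr x)) := by
      rw [mul_assoc, ← Real.exp_add]
      have h3 : (0:ℝ) ≤ a * R0 + -(a * rr x) := by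
        have : rr x ≤ R0 := hcase.le
        nlinarith
      nlinarith [Real.one_le_exp h3]
    have h4 : (0:ℝ) ≤ C0 * Real.exp (-(a * rr x)) := by positivity
    nlinarith
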